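/- arXiv:1009.0833 — 5 statements merged into one kernel-verified Lean document; each statement's English description precedes it below -/
import Mathlib

section
/- Let Δ be a simplicial complex on [n], let G be a face of Δ, and let Y = {x_i : i ∉ V(star_Δ G)}, where V(star_Δ G) denotes the vertex set of star_Δ G. Then in the localization S[x_i^{-1} : i ∈ G] one has I_Δ · S[x_i^{-1} : i ∈ G] = (I_{link_Δ G}, Y) · S[x_i^{-1} : i ∈ G]. -/
open CategoryTheory Opposite

/-! ### Abstract simplicial complexes -/

/-- An abstract simplicial complex on the vertex set `Fin n`: a collection of finite
subsets (faces) closed under taking subsets. -/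
structure SimComplex (n : ℕ) where
  faces : Set (Finset (Fin n))
  down_closed : ∀ ⦃F G : Finset (Fin n)⦄, F ∈ faces → G ⊆ F → G ∈ faces

namespace SimComplex

variable {n : ℕ}

/-- The vertex set of a simplicial complex. -/
def vertexSet (Δ : SimComplex n) : Set (Fin n) := {v | ({v} : Finset (Fin n)) ∈ Δ.faces}

/-- The dimension of a simplicial complex: the maximal cardinality of a face, minus one. -/
noncomputable def dim (Δ : SimComplex n) : ℤ :=
  (Int.ofNat (sSup (Finset.card '' Δ.faces))) - 1

/-- A facet is a maximal face. -/
def IsFacet (Δ : SimComplex n) (F : Finset (Fin n)) : Prop :=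
  F ∈ Δ.faces ∧ ∀ G ∈ Δ.faces, F ⊆ G → F = G

/-- A complex is pure if all facets have the same cardinality. -/
def Pure (Δ : SimComplex n) : Prop :=
  ∀ F G, Δ.IsFacet F → Δ.IsFacet G → F.card = G.card

/-- A matroid: for any two faces `F`, `G` with `|F| > |G|` there is `i ∈ F ∖ G`
with `G ∪ {i}` a face. -/
def IsMatroid (Δ : SimComplex n) : Prop :=
  ∀ F G, F ∈ Δ.faces → G ∈ Δ.faces → G.card < F.card →
    ∃ i ∈ F, i ∉ G ∧ insert i G ∈ Δ.faces

/-- The link of a face `G`: `{F ∖ G : G ⊆ F ∈ Δ}`. -/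
def link (Δ : SimComplex n) (G : Finset (Fin n)) : SimComplex n where
  faces := {F | Disjoint F G ∧ F ∪ G ∈ Δ.faces}
  down_closed := by
    intro F F' hF hsub
    exact ⟨hF.1.mono_left hsub, Δ.down_closed hF.2 (Finset.union_subset_union hsub subset_rfl)⟩

/-- The star of a face `G`: `{F ∈ Δ : F ∪ G ∈ Δ}`. -/
def star (Δ : SimComplex n) (G : Finset (Fin n)) : SimComplex n where
  faces := {F | F ∈ Δ.faces ∧ F ∪ G ∈ Δ.faces}
  down_closed := by
    intro F F' hF hsub
    exact ⟨Δ.down_closed hF.1 hsub, Δ.down_closed hF.2 (Finset.union_subset_union hsub subset_rfl)⟩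

/-- `Δ` is locally a matroid if the link of every vertex is a matroid. -/
def LocallyMatroid (Δ : SimComplex n) : Prop :=
  ∀ v ∈ Δ.vertexSet, (Δ.link {v}).IsMatroid

/-- Two vertices are adjacent if they span a 1-dimensional face (an edge). -/
def Adj (Δ : SimComplex n) (u v : Fin n) : Prop :=
  u ≠ v ∧ ({u, v} : Finset (Fin n)) ∈ Δ.faces

/-- Two vertices are joined by a path of edges. -/
def Reach (Δ : SimComplex n) : Fin n → Fin n → Prop := Relation.ReflTransGen Δ.Adj

/-- A complex is connected if any two vertices are joined by a path of edges. -/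
def Connected (Δ : SimComplex n) : Prop :=
  ∀ u ∈ Δ.vertexSet, ∀ v ∈ Δ.vertexSet, Δ.Reach u v

/-- The induced subcomplex on a set `W` of vertices. -/
def induced (Δ : SimComplex n) (W : Set (Fin n)) : SimComplex n where
  faces := {F | F ∈ Δ.faces ∧ ↑F ⊆ W}
  down_closed := by
    intro F F' hF hsub
    exact ⟨Δ.down_closed hF.1 hsub, subset_trans (Finset.coe_subset.2 hsub) hF.2⟩

/-- The connected component of a vertex `v`, as an induced subcomplex. -/
def component (Δ : SimComplex n) (v : Fin n) : SimComplex n :=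
  Δ.induced {u | Δ.Reach v u}

/-- A minimal nonface: a subset of the vertex set which is not a face, all of whose
proper subsets are faces. -/
def IsMinNonface (Δ : SimComplex n) (F : Finset (Fin n)) : Prop :=
  ↑F ⊆ Δ.vertexSet ∧ F ∉ Δ.faces ∧ ∀ G ⊂ F, G ∈ Δ.faces

/-- A complete intersection complex: the minimal nonfaces are pairwise disjoint. -/
def IsCompleteIntersection (Δ : SimComplex n) : Prop :=
  ∀ F G, Δ.IsMinNonface F → Δ.IsMinNonface G → F ≠ G → Disjoint F G

/-- `Δ` is locally a complete intersection if the link of every vertex is one. -/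
def LocallyCompleteIntersection (Δ : SimComplex n) : Prop :=
  ∀ v ∈ Δ.vertexSet, (Δ.link {v}).IsCompleteIntersection

/-- A path graph: vertices `f 0, …, f (k+1)` and edges exactly the consecutive pairs. -/
def IsPathGraph (Δ : SimComplex n) : Prop :=
  ∃ (k : ℕ) (f : Fin (k + 2) → Fin n), Function.Injective f ∧
    Δ.vertexSet = Set.range f ∧
    ∀ e : Finset (Fin n), (e ∈ Δ.faces ∧ e.card = 2) ↔
      ∃ i : Fin (k + 1), e = {f i.castSucc, f i.succ}

/-- A cycle graph: vertices `f 0, …, f (k+2)` and edges exactly the cyclically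
consecutive pairs. -/
def IsCycleGraph (Δ : SimComplex n) : Prop :=
  ∃ (k : ℕ) (f : Fin (k + 3) → Fin n), Function.Injective f ∧
    Δ.vertexSet = Set.range f ∧
    ∀ e : Finset (Fin n), (e ∈ Δ.faces ∧ e.card = 2) ↔
      ∃ i : Fin (k + 3), e = {f i, f (i + 1)}

end SimComplex

/-! ### Commutative-algebra notions -/

noncomputable section

/-- The `i`-th Ext group of two modules over a commutative ring. -/
def ExtGroup (A : Type) [CommRing A] (i : ℕ) (M N : Type) [AddCommGroup M] [Module A M]
    [AddCommGroup N] [Module A N] : Type :=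
  ((Ext A (ModuleCat A) i).obj (op (ModuleCat.of A M))).obj (ModuleCat.of A N)

/-- A local ring is Cohen–Macaulay if its depth equals its Krull dimension, i.e. if
`Ext^i(residue field, B)` vanishes for all `i < dim B`. -/
def IsCohenMacaulayLocalRing (B : Type) [CommRing B] [IsLocalRing B] : Prop :=
  ∀ i : ℕ, (i : WithBot ℕ∞) < ringKrullDim B →
    Subsingleton (ExtGroup B i (B ⧸ IsLocalRing.maximalIdeal B) B)

/-- A commutative ring is Cohen–Macaulay if all its localizations at primes are
Cohen–Macaulay local rings. -/
def IsCohenMacaulayRing (A : Type) [CommRing A] : Prop :=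
  ∀ (P : Ideal A) (hP : P.IsPrime),
    letI : P.IsPrime := hP
    IsCohenMacaulayLocalRing (Localization.AtPrime P)

/-- An ideal `I` of `A` is Cohen–Macaulay if `A ⧸ I` is a Cohen–Macaulay ring. -/
def IsCohenMacaulayIdeal {A : Type} [CommRing A] (I : Ideal A) : Prop :=
  IsCohenMacaulayRing (A ⧸ I)

/-- The ideal `I` satisfies Serre's condition `(S₂)`: for every prime `P` of `A`, the
depth of the localized module `(A⧸I)_P` over `A_P` is at least `min {2, height P}`,
where the height of `P` is the Krull dimension of `A_P` and depth is detected by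
vanishing of `Ext^i` from the residue field. -/
def SatisfiesS2 {A : Type} [CommRing A] (I : Ideal A) : Prop :=
  ∀ (P : Ideal A) (hP : P.IsPrime),
    letI : P.IsPrime := hP
    ∀ i : ℕ, (i : WithBot ℕ∞) < min 2 (ringKrullDim (Localization.AtPrime P)) →
      Subsingleton (ExtGroup (Localization.AtPrime P) i
        (Localization.AtPrime P ⧸ IsLocalRing.maximalIdeal (Localization.AtPrime P))
        (LocalizedModule P.primeCompl (A ⧸ I)))

/-- The `m`-th symbolic power of an ideal: the intersection of the `m`-th powers of
its minimal primes. -/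
def symbPowIdeal {A : Type} [CommRing A] (I : Ideal A) (m : ℕ) : Ideal A :=
  ⨅ P ∈ I.minimalPrimes, P ^ m

end

/-! ### Stanley–Reisner theory -/

noncomputable section

open MvPolynomial

/-- The squarefree monomial attached to a finite set of variables. -/
def faceMonomial (K : Type) [Field K] {n : ℕ} (F : Finset (Fin n)) : MvPolynomial (Fin n) K :=
  ∏ i ∈ F, X i

/-- The Stanley–Reisner ideal of a complex on `[n]`: generated by the squarefree
monomials corresponding to nonfaces. -/
def SRIdeal (K : Type) [Field K] {n : ℕ} (Δ : SimComplex n) : Ideal (MvPolynomial (Fin n) K) :=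
  Ideal.span {p | ∃ F : Finset (Fin n), F ∉ Δ.faces ∧ p = faceMonomial K F}

/-- The Stanley–Reisner ideal of a complex whose vertex set may be a proper subset of
`[n]`: generated by the squarefree monomials of nonfaces contained in the vertex set. -/
def SRIdealOn (K : Type) [Field K] {n : ℕ} (Δ : SimComplex n) : Ideal (MvPolynomial (Fin n) K) :=
  Ideal.span {p | ∃ F : Finset (Fin n), ↑F ⊆ Δ.vertexSet ∧ F ∉ Δ.faces ∧ p = faceMonomial K F}

/-- The prime ideal generated by the variables indexed by `F`. -/
def PF (K : Type) [Field K] {n : ℕ} (F : Finset (Fin n)) : Ideal (MvPolynomial (Fin n) K) :=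
  Ideal.span ((fun i => (X i : MvPolynomial (Fin n) K)) '' ↑F)

/-- The `m`-th symbolic power of the Stanley–Reisner ideal:
`I_Δ^{(m)} = ⋂_{F facet} P_{complement of F}^m`. -/
def SRSymbPow (K : Type) [Field K] {n : ℕ} (Δ : SimComplex n) (m : ℕ) :
    Ideal (MvPolynomial (Fin n) K) :=
  ⨅ (F : Finset (Fin n)) (_ : Δ.IsFacet F), (PF K Fᶜ) ^ m

/-- The cover ideal `J(Δ) = ⋂_{F facet} P_F` and its symbolic powers. -/
def coverSymbPow (K : Type) [Field K] {n : ℕ} (Δ : SimComplex n) (m : ℕ) :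
    Ideal (MvPolynomial (Fin n) K) :=
  ⨅ (F : Finset (Fin n)) (_ : Δ.IsFacet F), (PF K F) ^ m

/-- The graded maximal ideal `(x_1, …, x_n)`. -/
def maxIdeal (K : Type) [Field K] (n : ℕ) : Ideal (MvPolynomial (Fin n) K) :=
  Ideal.span (Set.range X)

/-- The `i`-th local cohomology module of `S ⧸ I` with support in the maximal
graded ideal. -/
def locCoh (K : Type) [Field K] {n : ℕ} (i : ℕ) (I : Ideal (MvPolynomial (Fin n) K)) :
    ModuleCat (MvPolynomial (Fin n) K) :=
  (localCohomology (maxIdeal K n) i).obj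
    (ModuleCat.of (MvPolynomial (Fin n) K) (MvPolynomial (Fin n) K ⧸ I))

/-- `I` is quasi-Buchsbaum: the maximal ideal annihilates all local cohomology modules
`H^i_m(S⧸I)` for `i < dim S⧸I`. -/
def IsQuasiBuchsbaum (K : Type) [Field K] {n : ℕ} (I : Ideal (MvPolynomial (Fin n) K)) : Prop :=
  ∀ i : ℕ, (i : WithBot ℕ∞) < ringKrullDim (MvPolynomial (Fin n) K ⧸ I) →
    ∀ x ∈ maxIdeal K n, ∀ y : (locCoh K i I), x • y = 0

/-- `I` is Buchsbaum: for `i < dim S⧸I` the natural map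
`Ext^i_S(S⧸m, S⧸I) → H^i_m(S⧸I)` (the structure map into the direct limit defining local
cohomology) is surjective. -/
def IsBuchsbaum (K : Type) [Field K] {n : ℕ} (I : Ideal (MvPolynomial (Fin n) K)) : Prop :=
  ∀ i : ℕ, (i : WithBot ℕ∞) < ringKrullDim (MvPolynomial (Fin n) K ⧸ I) →
    letI := localCohomology.hasColimitDiagram
      (localCohomology.idealPowersDiagram (maxIdeal K n)) i
    Function.Surjective
      ((CategoryTheory.Limits.colimit.ι
          (localCohomology.diagram (localCohomology.idealPowersDiagram (maxIdeal K n)) i)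
          (Opposite.op (Opposite.op (1 : ℕ)))).app
        (ModuleCat.of (MvPolynomial (Fin n) K) (MvPolynomial (Fin n) K ⧸ I)))

/-- `I` is generalized Cohen–Macaulay: the local cohomology modules `H^i_m(S⧸I)` are
finite-dimensional over `K` for `i < dim S⧸I`. -/
def IsGeneralizedCM (K : Type) [Field K] {n : ℕ} (I : Ideal (MvPolynomial (Fin n) K)) : Prop :=
  ∀ i : ℕ, (i : WithBot ℕ∞) < ringKrullDim (MvPolynomial (Fin n) K ⧸ I) →
    Module.Finite K (RestrictScalars K (MvPolynomial (Fin n) K) (locCoh K i I))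

end

/-! ### Monomial ideals -/

/-- A monomial ideal of `K[x_1,…,x_n]`. -/
def IsMonomialIdeal {K : Type} [Field K] {n : ℕ} (I : Ideal (MvPolynomial (Fin n) K)) : Prop :=
  ∃ S : Set (Fin n →₀ ℕ),
    I = Ideal.span {p | ∃ d ∈ S, p = MvPolynomial.monomial d (1 : K)}

/-- A squarefree monomial ideal of `K[x_1,…,x_n]`. -/
def IsSquarefreeMonomialIdeal {K : Type} [Field K] {n : ℕ}
    (I : Ideal (MvPolynomial (Fin n) K)) : Prop :=
  ∃ S : Set (Finset (Fin n)),
    I = Ideal.span {p | ∃ F ∈ S, p = ∏ i ∈ F, (MvPolynomial.X i : MvPolynomial (Fin n) K)}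


/-- Auxiliary: if `a * b ∈ I` and `b` is a unit, then `a ∈ I`. -/
lemma mem_of_mul_isUnit_mem {R : Type*} [CommRing R] {I : Ideal R} {a b : R}
    (hb : IsUnit b) (h : a * b ∈ I) : a ∈ I := by
  obtain ⟨u, rfl⟩ := hb
  have h2 := I.mul_mem_right (↑u⁻¹) h
  rwa [mul_assoc, Units.mul_inv, mul_one] at h2

/-- **Lemma (localization of a Stanley–Reisner ideal at a face).** For a face `G` of `Δ` and
`Y = {x_i : i ∉ V(star_Δ G)}`, in `S[x_i^{-1} : i ∈ G]` one has
`I_Δ S[x_i^{-1} : i ∈ G] = (I_{link_Δ G}, Y) S[x_i^{-1} : i ∈ G]`. -/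
theorem SRIdeal_localization_at_face (K : Type) [Field K] {n : ℕ} (Δ : SimComplex n)
    (hV : ∀ i : Fin n, ({i} : Finset (Fin n)) ∈ Δ.faces)
    (G : Finset (Fin n)) (hG : G ∈ Δ.faces) :
    Ideal.map
        (algebraMap (MvPolynomial (Fin n) K)
          (Localization (Submonoid.closure
            ((fun i => (MvPolynomial.X i : MvPolynomial (Fin n) K)) '' (G : Set (Fin n))))))
        (SRIdeal K Δ) =
      Ideal.map
        (algebraMap (MvPolynomial (Fin n) K)
          (Localization (Submonoid.closure
            ((fun i => (MvPolynomial.X i : MvPolynomial (Fin n) K)) '' (G : Set (Fin n))))))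
        (SRIdealOn K (Δ.link G) ⊔
          Ideal.span {p : MvPolynomial (Fin n) K |
            ∃ i : Fin n, i ∉ (Δ.star G).vertexSet ∧ p = MvPolynomial.X i}) := by
    classical
  set M := Submonoid.closure
      ((fun i => (MvPolynomial.X i : MvPolynomial (Fin n) K)) '' (G : Set (Fin n))) with hM
  set f := algebraMap (MvPolynomial (Fin n) K) (Localization M) with hf
  have hGmem : faceMonomial K G ∈ M := by
    apply Submonoid.prod_mem
    intro i hi
    exact Submonoid.subset_closure ⟨i, hi, rfl⟩
  have huG : IsUnit (f (faceMonomial K G)) :=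
    IsLocalization.map_units (Localization M) (⟨faceMonomial K G, hGmem⟩ : M)
  apply le_antisymm
  · apply Ideal.map_mono
    rw [SRIdeal]
    apply Ideal.span_le.2
    rintro p ⟨F, hF, rfl⟩
    by_cases h : ∃ i ∈ F, i ∉ (Δ.star G).vertexSet
    · obtain ⟨i, hiF, hi⟩ := h
      have heq : faceMonomial K F = MvPolynomial.X i * faceMonomial K (F.erase i) := by
        rw [faceMonomial, faceMonomial, Finset.mul_prod_erase _ _ hiF]
      rw [heq]
      exact Ideal.mul_mem_right _ _ (Ideal.mem_sup_right (Ideal.subset_span ⟨i, hi, rfl⟩))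
    · push_neg at h
      have hdisj : Disjoint (F \ G) G := Finset.sdiff_disjoint
      have hsub : ↑(F \ G) ⊆ (Δ.link G).vertexSet := by
        intro i hi
        simp only [Finset.coe_sdiff, Set.mem_diff, Finset.mem_coe] at hi
        have hstar := h i hi.1
        have : ({i} : Finset (Fin n)) ∈ (Δ.star G).faces := hstar
        refine ⟨?_, this.2⟩
        simp [Finset.disjoint_singleton_left, hi.2]
      have hnon : (F \ G) ∉ (Δ.link G).faces := by
        intro hmem
        have h1 : (F \ G) ∪ G ∈ Δ.faces := hmem.2
        have h2 : F ⊆ (F \ G) ∪ G := by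
          intro x hx
          by_cases hxG : x ∈ G
          · exact Finset.mem_union_right _ hxG
          · exact Finset.mem_union_left _ (Finset.mem_sdiff.2 ⟨hx, hxG⟩)
        exact hF (Δ.down_closed h1 h2)
      have heq : faceMonomial K F = faceMonomial K (F \ G) * faceMonomial K (F ∩ G) := by
        rw [faceMonomial, faceMonomial, faceMonomial, ← Finset.prod_union
          (Finset.disjoint_of_subset_right Finset.inter_subset_right hdisj),
          Finset.sdiff_union_inter]
      rw [heq]
      exact Ideal.mul_mem_right _ _
        (Ideal.mem_sup_left (Ideal.subset_span ⟨F \ G, hsub, hnon, rfl⟩))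
  · rw [Ideal.map_le_iff_le_comap]
    apply sup_le
    · rw [SRIdealOn]
      apply Ideal.span_le.2
      rintro p ⟨F, hFsub, hFnon, rfl⟩
      simp only [SetLike.mem_coe, Ideal.mem_comap]
      have hdisj : Disjoint F G := by
        rw [Finset.disjoint_left]
        intro i hiF hiG
        have := hFsub hiF
        have hlink : ({i} : Finset (Fin n)) ∈ (Δ.link G).faces := this
        have := hlink.1
        rw [Finset.disjoint_singleton_left] at this
        exact this hiG
      have hnonface : F ∪ G ∉ Δ.faces := by
        intro hmem
        exact hFnon ⟨hdisj, hmem⟩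
      have key : f (faceMonomial K F) * f (faceMonomial K G) ∈
          Ideal.map f (SRIdeal K Δ) := by
        rw [← map_mul]
        have : faceMonomial K F * faceMonomial K G = faceMonomial K (F ∪ G) := by
          rw [faceMonomial, faceMonomial, faceMonomial, ← Finset.prod_union hdisj]
        rw [this]
        exact Ideal.mem_map_of_mem f (Ideal.subset_span ⟨F ∪ G, hnonface, rfl⟩)
      exact mem_of_mul_isUnit_mem huG key
    · apply Ideal.span_le.2
      rintro p ⟨i, hi, rfl⟩
      simp only [SetLike.mem_coe, Ideal.mem_comap]
      have hiG : i ∉ G := by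
        intro hiG
        apply hi
        refine ⟨hV i, ?_⟩
        have : ({i} : Finset (Fin n)) ∪ G = G := by
          ext x; simp only [Finset.mem_union, Finset.mem_singleton]
          constructor
          · rintro (rfl | hx); exacts [hiG, hx]
          · exact Or.inr
        rw [this]; exact hG
      have hnonface : insert i G ∉ Δ.faces := by
        intro hmem
        apply hi
        refine ⟨hV i, ?_⟩
        have : ({i} : Finset (Fin n)) ∪ G = insert i G := by
          ext x; simp [Finset.mem_insert]
        rw [this]; exact hmem
      have key : f (MvPolynomial.X i) * f (faceMonomial K G) ∈
          Ideal.map f (SRIdeal K Δ) := by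
        rw [← map_mul]
        have : MvPolynomial.X i * faceMonomial K G = faceMonomial K (insert i G) := by
          rw [faceMonomial, faceMonomial, Finset.prod_insert hiG]
        rw [this]
        exact Ideal.mem_map_of_mem f (Ideal.subset_span ⟨insert i G, hnonface, rfl⟩)
      exact mem_of_mul_isUnit_mem huG key
end

section
/- A graph Γ without isolated vertices is a matroid (regarded as a 1-dimensional simplicial complex) if and only if every pair of disjoint edges of Γ is contained in a 4-cycle of Γ. -/
open CategoryTheory Opposite

/-- **Corollary (matroid graphs).** A graph without isolated vertices is a matroid if and
only if every pair of disjoint edges is contained in a 4-cycle. -/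
theorem graph_matroid_iff_disjoint_edges_in_four_cycle {n : ℕ} (Δ : SimComplex n)
    (hgraph : ∀ F ∈ Δ.faces, F.card ≤ 2)
    (hiso : ∀ v : Fin n, ({v} : Finset (Fin n)) ∈ Δ.faces →
      ∃ w : Fin n, w ≠ v ∧ ({v, w} : Finset (Fin n)) ∈ Δ.faces) :
    Δ.IsMatroid ↔
      ∀ e f : Finset (Fin n), e ∈ Δ.faces → f ∈ Δ.faces → e.card = 2 → f.card = 2 →
        Disjoint e f →
        ∃ a b c d : Fin n, ({a, b, c, d} : Finset (Fin n)).card = 4 ∧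
          e = {a, b} ∧ f = {c, d} ∧
          ({a, b} : Finset (Fin n)) ∈ Δ.faces ∧ ({b, c} : Finset (Fin n)) ∈ Δ.faces ∧
          ({c, d} : Finset (Fin n)) ∈ Δ.faces ∧ ({d, a} : Finset (Fin n)) ∈ Δ.faces := by
  have card4 : ∀ w x y z : Fin n, w ≠ x → w ≠ y → w ≠ z → x ≠ y → x ≠ z → y ≠ z →
      ({w, x, y, z} : Finset (Fin n)).card = 4 := by
    intro w x y z h1 h2 h3 h4 h5 h6
    rw [Finset.card_insert_of_notMem (by simp [h1, h2, h3]),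
      Finset.card_insert_of_notMem (by simp [h4, h5]),
      Finset.card_insert_of_notMem (by simp [h6]), Finset.card_singleton]
  constructor
  · intro hM e f he hf hce hcf hdisj
    obtain ⟨a, b, hab, rfl⟩ := Finset.card_eq_two.mp hce
    obtain ⟨c, d, hcd, rfl⟩ := Finset.card_eq_two.mp hcf
    have hac : a ≠ c := by rintro rfl; exact Finset.disjoint_left.mp hdisj (Finset.mem_insert_self a {b}) (by simp)
    have had : a ≠ d := by rintro rfl; exact Finset.disjoint_left.mp hdisj (Finset.mem_insert_self a {b}) (by simp)
    have hbc : b ≠ c := by rintro rfl; exact Finset.disjoint_left.mp hdisj (Finset.mem_insert_of_mem (Finset.mem_singleton_self b)) (by simp)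
    have hbd : b ≠ d := by rintro rfl; exact Finset.disjoint_left.mp hdisj (Finset.mem_insert_of_mem (Finset.mem_singleton_self b)) (by simp)
    have key : ∀ x y u : Fin n, x ≠ y → ({x, y} : Finset (Fin n)) ∈ Δ.faces →
        ({u} : Finset (Fin n)) ∈ Δ.faces → u ≠ x → u ≠ y →
        ({x, u} : Finset (Fin n)) ∈ Δ.faces ∨ ({y, u} : Finset (Fin n)) ∈ Δ.faces := by
      intro x y u hxy hxyf huf hux huy
      obtain ⟨i, hi, _, hins⟩ := hM {x, y} {u} hxyf huf (by
        rw [Finset.card_singleton, Finset.card_insert_of_notMem (by simp [hxy]),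
          Finset.card_singleton]; omega)
      rcases Finset.mem_insert.mp hi with rfl | hi
      · exact Or.inl hins
      · rw [Finset.mem_singleton.mp hi] at hins
        exact Or.inr hins
    have hcs : ({c} : Finset (Fin n)) ∈ Δ.faces := Δ.down_closed hf (by simp)
    have hds : ({d} : Finset (Fin n)) ∈ Δ.faces := Δ.down_closed hf (by simp)
    have has : ({a} : Finset (Fin n)) ∈ Δ.faces := Δ.down_closed he (by simp)
    have hbs : ({b} : Finset (Fin n)) ∈ Δ.faces := Δ.down_closed he (by simp)
    have h1 := key a b c hab he hcs hac.symm hbc.symm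
    have h2 := key a b d hab he hds had.symm hbd.symm
    have h3 := key c d a hcd hf has hac had
    have h4 := key c d b hcd hf hbs hbc hbd
    -- two ways of closing the goal
    have cyc1 : ({b, c} : Finset (Fin n)) ∈ Δ.faces → ({a, d} : Finset (Fin n)) ∈ Δ.faces →
        ∃ a' b' c' d' : Fin n, ({a', b', c', d'} : Finset (Fin n)).card = 4 ∧
          ({a, b} : Finset (Fin n)) = {a', b'} ∧ ({c, d} : Finset (Fin n)) = {c', d'} ∧
          ({a', b'} : Finset (Fin n)) ∈ Δ.faces ∧ ({b', c'} : Finset (Fin n)) ∈ Δ.faces ∧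
          ({c', d'} : Finset (Fin n)) ∈ Δ.faces ∧ ({d', a'} : Finset (Fin n)) ∈ Δ.faces := by
      intro hx hy
      exact ⟨a, b, c, d, card4 a b c d hab hac had hbc hbd hcd, rfl, rfl, he, hx, hf,
        by rwa [Finset.pair_comm]⟩
    have cyc2 : ({a, c} : Finset (Fin n)) ∈ Δ.faces → ({b, d} : Finset (Fin n)) ∈ Δ.faces →
        ∃ a' b' c' d' : Fin n, ({a', b', c', d'} : Finset (Fin n)).card = 4 ∧
          ({a, b} : Finset (Fin n)) = {a', b'} ∧ ({c, d} : Finset (Fin n)) = {c', d'} ∧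
          ({a', b'} : Finset (Fin n)) ∈ Δ.faces ∧ ({b', c'} : Finset (Fin n)) ∈ Δ.faces ∧
          ({c', d'} : Finset (Fin n)) ∈ Δ.faces ∧ ({d', a'} : Finset (Fin n)) ∈ Δ.faces := by
      intro hx hy
      exact ⟨b, a, c, d, card4 b a c d hab.symm hbc hbd hac had hcd, Finset.pair_comm a b, rfl,
        by rwa [Finset.pair_comm] at he, hx, hf, by rwa [Finset.pair_comm]⟩
    rcases h1 with hAC | hBC
    · rcases h2 with hAD | hBD
      · rcases h4 with hCB | hDB
        · exact cyc1 (by rwa [Finset.pair_comm]) hAD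
        · exact cyc2 hAC (by rwa [Finset.pair_comm])
      · exact cyc2 hAC hBD
    · rcases h2 with hAD | hBD
      · exact cyc1 hBC hAD
      · rcases h3 with hCA | hDA
        · exact cyc2 (by rwa [Finset.pair_comm]) hBD
        · exact cyc1 hBC (by rwa [Finset.pair_comm])
  · intro h4c F G hF hG hlt
    have hFc := hgraph F hF
    rcases Nat.lt_or_ge G.card 1 with hG0 | hG1
    · -- G = ∅
      have hGe : G = ∅ := Finset.card_eq_zero.mp (Nat.lt_one_iff.mp hG0)
      obtain ⟨i, hi⟩ := Finset.card_pos.mp (hGe ▸ hlt)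
      refine ⟨i, hi, by simp [hGe], ?_⟩
      subst hGe
      simpa using Δ.down_closed hF (Finset.singleton_subset_iff.mpr hi)
    · -- G.card = 1
      have hG1' : G.card = 1 := le_antisymm (by omega) hG1
      obtain ⟨v, rfl⟩ := Finset.card_eq_one.mp hG1'
      have hF2 : F.card = 2 := by omega
      obtain ⟨a, b, hab, rfl⟩ := Finset.card_eq_two.mp hF2
      by_cases hvF : v ∈ ({a, b} : Finset (Fin n))
      · rcases Finset.mem_insert.mp hvF with rfl | hvb
        · exact ⟨b, by simp, by simp [hab.symm], by rw [Finset.pair_comm]; exact hF⟩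
        · rw [Finset.mem_singleton.mp hvb]
          exact ⟨a, by simp, by simp [hab], hF⟩
      · have hva : v ≠ a := fun h => hvF (by simp [h])
        have hvb : v ≠ b := fun h => hvF (by simp [h])
        obtain ⟨w, hwv, hvw⟩ := hiso v hG
        by_cases hwF : w ∈ ({a, b} : Finset (Fin n))
        · exact ⟨w, hwF, by simp [hwv], by rw [Finset.pair_comm]; exact hvw⟩
        · have hwa : w ≠ a := fun h => hwF (by simp [h])
          have hwb : w ≠ b := fun h => hwF (by simp [h])
          have hdisj : Disjoint ({a, b} : Finset (Fin n)) ({v, w} : Finset (Fin n)) := by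
            rw [Finset.disjoint_right]
            intro x hx
            rcases Finset.mem_insert.mp hx with rfl | hx
            · exact hvF
            · rw [Finset.mem_singleton.mp hx]; exact hwF
          have hvw2 : ({v, w} : Finset (Fin n)).card = 2 := by
            rw [Finset.card_insert_of_notMem (by simp [hwv.symm]), Finset.card_singleton]
          obtain ⟨a', b', c', d', _, hFe, hfe, _, hbc', _, hda'⟩ :=
            h4c {a, b} {v, w} hF hvw hF2 hvw2 hdisj
          have hvcd : v ∈ ({c', d'} : Finset (Fin n)) := hfe ▸ (by simp)
          rcases Finset.mem_insert.mp hvcd with rfl | hvd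
          · -- v = c', edge {b', v}
            have hb'F : b' ∈ ({a, b} : Finset (Fin n)) := hFe ▸ (by simp)
            have hb'v : b' ≠ v := fun h => hvF (h ▸ hb'F)
            exact ⟨b', hb'F, by simp [hb'v], hbc'⟩
          · -- v = d', edge {v, a'}
            rw [Finset.mem_singleton.mp hvd]
            have ha'F : a' ∈ ({a, b} : Finset (Fin n)) := hFe ▸ (by simp)
            have ha'v : a' ≠ d' := fun h => hvF ((Finset.mem_singleton.mp hvd) ▸ h ▸ ha'F)
            refine ⟨a', ha'F, by simp [ha'v], ?_⟩
            rw [Finset.pair_comm]; exact hda'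
end

section
/- Let Δ be a simplicial complex with dim Δ ≥ 2. Then Δ is a matroid if and only if Δ is connected and locally a matroid. -/
open CategoryTheory Opposite

namespace SimComplex

variable {n : ℕ}

lemma mem_link_iff (Δ : SimComplex n) {v : Fin n} {F : Finset (Fin n)} :
    F ∈ (Δ.link {v}).faces ↔ v ∉ F ∧ insert v F ∈ Δ.faces := by
  have h : F ∪ {v} = insert v F := by rw [Finset.union_comm, ← Finset.insert_eq]
  simp only [link, Set.mem_setOf_eq, Finset.disjoint_singleton_right, h]

lemma aug_aux {M : SimComplex n} (hM : M.IsMatroid) :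
    ∀ (k : ℕ) (T S : Finset (Fin n)), T ∈ M.faces → S ∈ M.faces →
      T.card ≤ S.card → S.card ≤ T.card + k →
      ∃ T', T' ∈ M.faces ∧ T ⊆ T' ∧ T' ⊆ T ∪ S ∧ T'.card = S.card := by
  intro k
  induction k with
  | zero =>
    intro T S hT _ h1 h2
    exact ⟨T, hT, subset_rfl, Finset.subset_union_left, le_antisymm h1 (by omega)⟩
  | succ k ih =>
    intro T S hT hS h1 h2
    rcases eq_or_lt_of_le h1 with heq | hlt
    · exact ⟨T, hT, subset_rfl, Finset.subset_union_left, heq⟩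
    · obtain ⟨i, hiS, hiT, hins⟩ := hM S T hS hT hlt
      obtain ⟨T', hT', hs1, hs2, hcard⟩ := ih (insert i T) S hins hS
        (by rw [Finset.card_insert_of_notMem hiT]; omega)
        (by rw [Finset.card_insert_of_notMem hiT]; omega)
      refine ⟨T', hT', (Finset.subset_insert i T).trans hs1, ?_, hcard⟩
      intro x hx
      rcases Finset.mem_union.1 (hs2 hx) with h | h
      · rcases Finset.mem_insert.1 h with rfl | h
        · exact Finset.mem_union_right _ hiS
        · exact Finset.mem_union_left _ h
      · exact Finset.mem_union_right _ h

lemma par_aux {M : SimComplex n} (hM : M.IsMatroid) {a c : Fin n} {S : Finset (Fin n)}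
    (ha : ({a} : Finset (Fin n)) ∈ M.faces) (hS : S ∈ M.faces) (hcS : c ∈ S) (haS : a ∉ S)
    (hac : ({a, c} : Finset (Fin n)) ∉ M.faces) :
    insert a (S.erase c) ∈ M.faces := by
  have hSpos : 0 < S.card := Finset.card_pos.2 ⟨c, hcS⟩
  obtain ⟨T', hT', h1, h2, hcard⟩ := aug_aux hM S.card {a} S ha hS
    (by rw [Finset.card_singleton]; omega) (by simp)
  have haT' : a ∈ T' := h1 (Finset.mem_singleton_self a)
  have hcT' : c ∉ T' := by
    intro hc
    exact hac (M.down_closed hT' (by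
      intro x hx
      rcases Finset.mem_insert.1 hx with rfl | hx
      · exact haT'
      · rw [Finset.mem_singleton.1 hx]; exact hc))
  have hsub : T' ⊆ insert a (S.erase c) := by
    intro x hx
    rcases Finset.mem_union.1 (h2 hx) with h | h
    · exact Finset.mem_insert.2 (Or.inl (Finset.mem_singleton.1 h))
    · by_cases hxa : x = a
      · exact Finset.mem_insert.2 (Or.inl hxa)
      · exact Finset.mem_insert.2 (Or.inr (Finset.mem_erase.2
          ⟨fun hxc => hcT' (hxc ▸ hx), h⟩))
  have hcard2 : (insert a (S.erase c)).card = S.card := by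
    rw [Finset.card_insert_of_notMem (fun h => haS (Finset.mem_of_mem_erase h)),
      Finset.card_erase_of_mem hcS]
    omega
  have heq : T' = insert a (S.erase c) :=
    Finset.eq_of_subset_of_card_le hsub (by omega)
  exact heq ▸ hT'

lemma seed3 (Δ : SimComplex n) (hdim : 2 ≤ Δ.dim) : ∃ W ∈ Δ.faces, W.card = 3 := by
  classical
  have hbdd : BddAbove (Finset.card '' Δ.faces) := by
    refine ⟨n, ?_⟩
    rintro m ⟨F, _, rfl⟩
    exact (Finset.card_le_univ F).trans (by simp)
  have hne : (Finset.card '' Δ.faces).Nonempty := by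
    by_contra h
    rw [Set.not_nonempty_iff_eq_empty] at h
    rw [dim, h] at hdim
    norm_num [csSup_empty] at hdim
  have hmem := Nat.sSup_mem hne hbdd
  obtain ⟨F, hF, hFc⟩ := hmem
  rw [dim] at hdim
  have h3 : 3 ≤ F.card := by
    rw [hFc]
    simp only [Int.ofNat_eq_natCast] at hdim
    omega
  obtain ⟨W, hWF, hW3⟩ := Finset.exists_subset_card_eq h3
  exact ⟨W, Δ.down_closed hF hWF, hW3⟩

end SimComplex
namespace SimComplex

variable {n : ℕ} {Δ : SimComplex n}

lemma exch_inter (hloc : Δ.LocallyMatroid) {F G : Finset (Fin n)} {v : Fin n}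
    (hF : F ∈ Δ.faces) (hG : G ∈ Δ.faces) (hvF : v ∈ F) (hvG : v ∈ G)
    (hcard : G.card < F.card) :
    ∃ i ∈ F, i ∉ G ∧ insert i G ∈ Δ.faces := by
  have hv : ({v} : Finset (Fin n)) ∈ Δ.faces :=
    Δ.down_closed hF (Finset.singleton_subset_iff.2 hvF)
  have hM := hloc v hv
  have hF' : F.erase v ∈ (Δ.link {v}).faces :=
    (mem_link_iff Δ).2 ⟨Finset.notMem_erase _ _, by rwa [Finset.insert_erase hvF]⟩
  have hG' : G.erase v ∈ (Δ.link {v}).faces :=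
    (mem_link_iff Δ).2 ⟨Finset.notMem_erase _ _, by rwa [Finset.insert_erase hvG]⟩
  have hGpos : 0 < G.card := Finset.card_pos.2 ⟨v, hvG⟩
  have hcard' : (G.erase v).card < (F.erase v).card := by
    rw [Finset.card_erase_of_mem hvF, Finset.card_erase_of_mem hvG]; omega
  obtain ⟨i, hi, hi2, hins⟩ := hM _ _ hF' hG' hcard'
  have hiv : i ≠ v := (Finset.mem_erase.1 hi).1
  refine ⟨i, Finset.mem_of_mem_erase hi,
    fun hiG => hi2 (Finset.mem_erase.2 ⟨hiv, hiG⟩), ?_⟩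
  rw [mem_link_iff] at hins
  have heq : insert v (insert i (G.erase v)) = insert i G := by
    rw [Finset.insert_comm, Finset.insert_erase hvG]
  exact heq ▸ hins.2

lemma exch_adj (hloc : Δ.LocallyMatroid) {F G : Finset (Fin n)} {u v : Fin n}
    (hF : F ∈ Δ.faces) (hG : G ∈ Δ.faces) (hdisj : ∀ x ∈ F, x ∉ G)
    (huF : u ∈ F) (hvG : v ∈ G) (huv : ({u, v} : Finset (Fin n)) ∈ Δ.faces)
    (hcard : G.card < F.card) :
    ∃ i ∈ F, i ∉ G ∧ insert i G ∈ Δ.faces := by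
  have hunev : u ≠ v := fun h => hdisj u huF (h ▸ hvG)
  have hu : ({u} : Finset (Fin n)) ∈ Δ.faces := Δ.down_closed huv (by simp)
  have hM := hloc u hu
  have hGpos : 0 < G.card := Finset.card_pos.2 ⟨v, hvG⟩
  have hS : F.erase u ∈ (Δ.link {u}).faces :=
    (mem_link_iff Δ).2 ⟨Finset.notMem_erase _ _, by rwa [Finset.insert_erase huF]⟩
  have hT : ({v} : Finset (Fin n)) ∈ (Δ.link {u}).faces :=
    (mem_link_iff Δ).2 ⟨by simpa using hunev, huv⟩
  obtain ⟨B, hB, hvB, hBsub, hBcard⟩ := aug_aux hM (F.erase u).card {v} (F.erase u) hT hS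
    (by rw [Finset.card_singleton, Finset.card_erase_of_mem huF]; omega) (by simp)
  rw [mem_link_iff] at hB
  have hH : insert u B ∈ Δ.faces := hB.2
  have hHcard : (insert u B).card = F.card := by
    rw [Finset.card_insert_of_notMem hB.1, hBcard, Finset.card_erase_of_mem huF]; omega
  have hvH : v ∈ insert u B := Finset.mem_insert_of_mem (hvB (Finset.mem_singleton_self v))
  obtain ⟨i, hiH, hiG, hins⟩ := exch_inter hloc hH hG hvH hvG (by rw [hHcard]; exact hcard)
  rcases Finset.mem_insert.1 hiH with rfl | hiB
  · exact ⟨i, huF, hiG, hins⟩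
  · rcases Finset.mem_union.1 (hBsub hiB) with h | h
    · exact absurd ((Finset.mem_singleton.1 h) ▸ hvG) hiG
    · exact ⟨i, Finset.mem_of_mem_erase h, hiG, hins⟩

lemma ex3 (hconn : Δ.Connected) (hloc : Δ.LocallyMatroid) (hdim : 2 ≤ Δ.dim) :
    ∀ v : Fin n, ({v} : Finset (Fin n)) ∈ Δ.faces →
      ∃ H ∈ Δ.faces, v ∈ H ∧ H.card = 3 := by
  obtain ⟨W, hW, hWc⟩ := seed3 Δ hdim
  obtain ⟨w, hw⟩ : W.Nonempty := Finset.card_pos.1 (by omega)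
  have hwv : ({w} : Finset (Fin n)) ∈ Δ.faces :=
    Δ.down_closed hW (Finset.singleton_subset_iff.2 hw)
  intro v hv
  have hreach : Relation.ReflTransGen Δ.Adj w v := hconn w hwv v hv
  clear hv
  induction hreach with
  | refl => exact ⟨W, hW, hw, hWc⟩
  | tail _ hbc ih =>
    rename_i b c _
    obtain ⟨H, hH, hbH, hH3⟩ := ih
    obtain ⟨hbcne, hbcmem⟩ := hbc
    by_cases hcH : c ∈ H
    · exact ⟨H, hH, hcH, hH3⟩
    · have hb : ({b} : Finset (Fin n)) ∈ Δ.faces := Δ.down_closed hbcmem (by simp)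
      have hMb := hloc b hb
      have hSH : H.erase b ∈ (Δ.link {b}).faces :=
        (mem_link_iff Δ).2 ⟨Finset.notMem_erase _ _, by rwa [Finset.insert_erase hbH]⟩
      have hTc : ({c} : Finset (Fin n)) ∈ (Δ.link {b}).faces :=
        (mem_link_iff Δ).2 ⟨by simpa using hbcne, hbcmem⟩
      obtain ⟨i, hiH, hic, hins⟩ := hMb _ _ hSH hTc
        (by rw [Finset.card_singleton, Finset.card_erase_of_mem hbH, hH3]; omega)
      rw [mem_link_iff] at hins
      refine ⟨insert b (insert i {c}), hins.2, by simp, ?_⟩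
      rw [Finset.card_insert_of_notMem hins.1,
        Finset.card_insert_of_notMem (by simpa using hic), Finset.card_singleton]

lemma link_two (hconn : Δ.Connected) (hloc : Δ.LocallyMatroid) (hdim : 2 ≤ Δ.dim)
    {u c : Fin n} (huc : ({u, c} : Finset (Fin n)) ∈ Δ.faces) (hne : u ≠ c) :
    ∃ B ∈ (Δ.link {c}).faces, u ∈ B ∧ B.card = 2 := by
  have hc : ({c} : Finset (Fin n)) ∈ Δ.faces := Δ.down_closed huc (by simp)
  obtain ⟨H, hH, hcH, hH3⟩ := ex3 hconn hloc hdim c hc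
  have hMc := hloc c hc
  have hSH : H.erase c ∈ (Δ.link {c}).faces :=
    (mem_link_iff Δ).2 ⟨Finset.notMem_erase _ _, by rwa [Finset.insert_erase hcH]⟩
  have hTu : ({u} : Finset (Fin n)) ∈ (Δ.link {c}).faces :=
    (mem_link_iff Δ).2 ⟨by simpa using hne.symm, by rwa [← Finset.pair_comm]⟩
  obtain ⟨i, hi, hiu, hins⟩ := hMc _ _ hSH hTu
    (by rw [Finset.card_singleton, Finset.card_erase_of_mem hcH, hH3]; omega)
  refine ⟨insert i {u}, hins, by simp, ?_⟩
  rw [Finset.card_insert_of_notMem (by simpa using hiu), Finset.card_singleton]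

lemma link_conn (hconn : Δ.Connected) (hloc : Δ.LocallyMatroid) (hdim : 2 ≤ Δ.dim)
    {c u t : Fin n} (hu : ({u, c} : Finset (Fin n)) ∈ Δ.faces) (hune : u ≠ c)
    (ht : ({t, c} : Finset (Fin n)) ∈ Δ.faces) (htne : t ≠ c) :
    Relation.ReflTransGen
      (fun p q => p ≠ q ∧ ({p, q} : Finset (Fin n)) ∈ (Δ.link {c}).faces) u t := by
  by_cases hut : u = t
  · subst hut; exact Relation.ReflTransGen.refl
  obtain ⟨B, hB, huB, hB2⟩ := link_two hconn hloc hdim hu hune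
  have hc : ({c} : Finset (Fin n)) ∈ Δ.faces := Δ.down_closed hu (by simp)
  have hMc := hloc c hc
  have hTt : ({t} : Finset (Fin n)) ∈ (Δ.link {c}).faces :=
    (mem_link_iff Δ).2 ⟨by simpa using htne.symm, by rwa [← Finset.pair_comm]⟩
  obtain ⟨k, hkB, hkt, hins⟩ := hMc B {t} hB hTt (by rw [Finset.card_singleton, hB2]; omega)
  have hkt' : k ≠ t := by simpa using hkt
  by_cases hku : k = u
  · subst hku
    exact Relation.ReflTransGen.single ⟨hut, hins⟩
  · have hsub : ({u, k} : Finset (Fin n)) ⊆ B := by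
      intro x hx
      rcases Finset.mem_insert.1 hx with rfl | hx
      · exact huB
      · rw [Finset.mem_singleton.1 hx]; exact hkB
    have hBuk : ({u, k} : Finset (Fin n)) = B :=
      Finset.eq_of_subset_of_card_le hsub
        (by rw [hB2, Finset.card_insert_of_notMem (by simpa using (Ne.symm hku)),
          Finset.card_singleton])
    refine Relation.ReflTransGen.head ⟨Ne.symm hku, hBuk ▸ hB⟩
      (Relation.ReflTransGen.single ⟨hkt', hins⟩)

end SimComplex
namespace SimComplex

variable {n : ℕ} {Δ : SimComplex n}

lemma transfer (hloc : Δ.LocallyMatroid) {a c : Fin n}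
    (ha : ({a} : Finset (Fin n)) ∈ Δ.faces)
    (hac : ({a, c} : Finset (Fin n)) ∉ Δ.faces) :
    ∀ {x y : Fin n},
      Relation.ReflTransGen
        (fun p q => p ≠ q ∧ ({p, q} : Finset (Fin n)) ∈ (Δ.link {c}).faces) x y →
      ({a, y} : Finset (Fin n)) ∈ Δ.faces → ({a, x} : Finset (Fin n)) ∈ Δ.faces := by
  have hanec : a ≠ c := by
    rintro rfl
    exact hac (by rwa [show ({a, a} : Finset (Fin n)) = {a} from by ext x; simp])
  intro x y h
  induction h using Relation.ReflTransGen.head_induction_on with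
  | refl => exact id
  | @head p z hstep htail ih =>
    intro hay
    have haz := ih hay
    obtain ⟨hpzne, hpzlink⟩ := hstep
    rw [mem_link_iff] at hpzlink
    obtain ⟨hcpz, hins⟩ := hpzlink
    have hpc : p ≠ c := by rintro rfl; exact hcpz (by simp)
    have hzc : z ≠ c := by rintro rfl; exact hcpz (by simp)
    have hzcf : ({z, c} : Finset (Fin n)) ∈ Δ.faces := by
      refine Δ.down_closed hins ?_
      intro w hw
      rcases Finset.mem_insert.1 hw with rfl | hw
      · exact Finset.mem_insert_of_mem (by simp)
      · rw [Finset.mem_singleton.1 hw]; exact Finset.mem_insert_self _ _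
    have haz_ne : a ≠ z := by rintro rfl; exact hac hzcf
    by_cases hpa : p = a
    · rw [hpa, show ({a, a} : Finset (Fin n)) = {a} from by ext w; simp]
      exact ha
    · have hz : ({z} : Finset (Fin n)) ∈ Δ.faces := Δ.down_closed haz (by simp)
      have hMz := hloc z hz
      have hS : ({p, c} : Finset (Fin n)) ∈ (Δ.link {z}).faces := by
        rw [mem_link_iff]
        constructor
        · simp [Ne.symm hpzne, hzc]
        · have heq : insert z ({p, c} : Finset (Fin n)) = insert c ({p, z} : Finset (Fin n)) := by
            ext w; simp; tauto
          rw [heq]; exact hins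
      have ha' : ({a} : Finset (Fin n)) ∈ (Δ.link {z}).faces := by
        rw [mem_link_iff]
        refine ⟨by simpa using Ne.symm haz_ne, ?_⟩
        rw [Finset.pair_comm z a]; exact haz
      have hac' : ({a, c} : Finset (Fin n)) ∉ (Δ.link {z}).faces := by
        intro h
        rw [mem_link_iff] at h
        exact hac (Δ.down_closed h.2 (Finset.subset_insert _ _))
      have hkey := par_aux hMz ha' hS (by simp)
        (by simp [Ne.symm hpa, hanec]) hac'
      have hpc_erase : ({p, c} : Finset (Fin n)).erase c = {p} := by
        ext w
        simp only [Finset.mem_erase, Finset.mem_insert, Finset.mem_singleton]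
        constructor
        · rintro ⟨h1, (rfl | rfl)⟩
          · rfl
          · exact absurd rfl h1
        · rintro rfl
          exact ⟨hpc, Or.inl rfl⟩
      rw [hpc_erase, mem_link_iff] at hkey
      exact Δ.down_closed hkey.2 (Finset.subset_insert _ _)

lemma propagate (hconn : Δ.Connected) (hloc : Δ.LocallyMatroid) (hdim : 2 ≤ Δ.dim)
    {a c t b : Fin n}
    (ha : ({a} : Finset (Fin n)) ∈ Δ.faces) (hac : ({a, c} : Finset (Fin n)) ∉ Δ.faces)
    (hat : ({a, t} : Finset (Fin n)) ∈ Δ.faces) (htc : ({t, c} : Finset (Fin n)) ∈ Δ.faces)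
    (hbc : ({b, c} : Finset (Fin n)) ∈ Δ.faces) (hbne : b ≠ c) :
    ({a, b} : Finset (Fin n)) ∈ Δ.faces := by
  have htnec : t ≠ c := by rintro rfl; exact hac hat
  exact transfer hloc ha hac (link_conn hconn hloc hdim hbc hbne htc htnec) hat

lemma tri (hconn : Δ.Connected) (hloc : Δ.LocallyMatroid) (hdim : 2 ≤ Δ.dim)
    {a c : Fin n} (ha : ({a} : Finset (Fin n)) ∈ Δ.faces) (hr : Δ.Reach a c) :
    ({a, c} : Finset (Fin n)) ∈ Δ.faces ∨
      ∃ t, ({a, t} : Finset (Fin n)) ∈ Δ.faces ∧ ({t, c} : Finset (Fin n)) ∈ Δ.faces := by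
  have h : Relation.ReflTransGen Δ.Adj a c := hr
  clear hr
  induction h with
  | refl =>
    left
    rwa [show ({a, a} : Finset (Fin n)) = {a} from by ext w; simp]
  | @tail b d hab hbd ih =>
    rcases ih with h | ⟨t, hat, htb⟩
    · exact Or.inr ⟨b, h, hbd.2⟩
    · by_cases hab' : ({a, b} : Finset (Fin n)) ∈ Δ.faces
      · exact Or.inr ⟨b, hab', hbd.2⟩
      · by_cases haeb : a = b
        · subst haeb; exact Or.inl hbd.2
        · left
          refine propagate hconn hloc hdim ha hab' hat htb ?_ hbd.1.symm
          rw [Finset.pair_comm d b]; exact hbd.2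

lemma neighbor_swap (hconn : Δ.Connected) (hloc : Δ.LocallyMatroid) (hdim : 2 ≤ Δ.dim)
    {a c b : Fin n}
    (ha : ({a} : Finset (Fin n)) ∈ Δ.faces) (hc : ({c} : Finset (Fin n)) ∈ Δ.faces)
    (hac : ({a, c} : Finset (Fin n)) ∉ Δ.faces)
    (hbc : ({b, c} : Finset (Fin n)) ∈ Δ.faces) (hbnec : b ≠ c) :
    ({a, b} : Finset (Fin n)) ∈ Δ.faces := by
  rcases tri hconn hloc hdim ha (hconn a ha c hc) with h | ⟨t, hat, htc⟩
  · exact absurd h hac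
  · exact propagate hconn hloc hdim ha hac hat htc hbc hbnec

lemma global_par (hconn : Δ.Connected) (hloc : Δ.LocallyMatroid) (hdim : 2 ≤ Δ.dim)
    {a c : Fin n} {S : Finset (Fin n)}
    (ha : ({a} : Finset (Fin n)) ∈ Δ.faces) (hS : S ∈ Δ.faces) (hcS : c ∈ S) (haS : a ∉ S)
    (hac : ({a, c} : Finset (Fin n)) ∉ Δ.faces) :
    insert a (S.erase c) ∈ Δ.faces := by
  by_cases hS1 : S = {c}
  · subst hS1
    simpa [Finset.erase_singleton] using ha
  · have hss : ({c} : Finset (Fin n)) ⊂ S :=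
      Finset.ssubset_iff_subset_ne.2 ⟨Finset.singleton_subset_iff.2 hcS, Ne.symm hS1⟩
    have h1 : 1 < S.card := by
      have := Finset.card_lt_card hss
      simpa using this
    obtain ⟨b, hbS, hbc⟩ := Finset.exists_mem_ne h1 c
    have hbcf : ({b, c} : Finset (Fin n)) ∈ Δ.faces := by
      refine Δ.down_closed hS ?_
      intro x hx
      rcases Finset.mem_insert.1 hx with rfl | hx
      · exact hbS
      · rw [Finset.mem_singleton.1 hx]; exact hcS
    have hc : ({c} : Finset (Fin n)) ∈ Δ.faces :=
      Δ.down_closed hS (Finset.singleton_subset_iff.2 hcS)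
    have hab : ({a, b} : Finset (Fin n)) ∈ Δ.faces :=
      neighbor_swap hconn hloc hdim ha hc hac hbcf hbc
    have hanb : a ≠ b := fun h => haS (h ▸ hbS)
    have hb : ({b} : Finset (Fin n)) ∈ Δ.faces := Δ.down_closed hbcf (by simp)
    have hMb := hloc b hb
    have hS' : S.erase b ∈ (Δ.link {b}).faces :=
      (mem_link_iff Δ).2 ⟨Finset.notMem_erase _ _, by rwa [Finset.insert_erase hbS]⟩
    have ha' : ({a} : Finset (Fin n)) ∈ (Δ.link {b}).faces := by
      refine (mem_link_iff Δ).2 ⟨by simpa using Ne.symm hanb, ?_⟩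
      rw [Finset.pair_comm b a]; exact hab
    have hac' : ({a, c} : Finset (Fin n)) ∉ (Δ.link {b}).faces := by
      intro h
      rw [mem_link_iff] at h
      exact hac (Δ.down_closed h.2 (Finset.subset_insert _ _))
    have hkey := par_aux hMb ha' hS' (Finset.mem_erase.2 ⟨Ne.symm hbc, hcS⟩)
      (fun h => haS (Finset.mem_of_mem_erase h)) hac'
    rw [mem_link_iff] at hkey
    have heq : insert b (insert a ((S.erase b).erase c)) = insert a (S.erase c) := by
      ext x
      simp only [Finset.mem_insert, Finset.mem_erase]
      constructor
      · rintro (rfl | rfl | ⟨hxc, hxb, hxS⟩)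
        · exact Or.inr ⟨hbc, hbS⟩
        · exact Or.inl rfl
        · exact Or.inr ⟨hxc, hxS⟩
      · rintro (rfl | ⟨hxc, hxS⟩)
        · exact Or.inr (Or.inl rfl)
        · by_cases hxb : x = b
          · exact Or.inl hxb
          · exact Or.inr (Or.inr ⟨hxc, hxb, hxS⟩)
    rw [← heq]
    exact hkey.2

lemma backward (hconn : Δ.Connected) (hloc : Δ.LocallyMatroid) (hdim : 2 ≤ Δ.dim) :
    Δ.IsMatroid := by
  intro F G hF hG hcard
  by_cases hint : (F ∩ G).Nonempty
  · obtain ⟨v, hv⟩ := hint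
    exact exch_inter hloc hF hG (Finset.mem_of_mem_inter_left hv)
      (Finset.mem_of_mem_inter_right hv) hcard
  · have hdisj : ∀ x ∈ F, x ∉ G := by
      intro x hxF hxG
      exact hint ⟨x, Finset.mem_inter.2 ⟨hxF, hxG⟩⟩
    rcases G.eq_empty_or_nonempty with rfl | ⟨v, hvG⟩
    · obtain ⟨i, hi⟩ : F.Nonempty := Finset.card_pos.1 (by omega)
      exact ⟨i, hi, by simp, Δ.down_closed hF (by simpa using hi)⟩
    · by_cases hadj : ∃ i ∈ F, ({v, i} : Finset (Fin n)) ∈ Δ.faces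
      · obtain ⟨i, hiF, hvi⟩ := hadj
        exact exch_adj hloc hF hG hdisj hiF hvG (by rwa [Finset.pair_comm] at hvi) hcard
      · push_neg at hadj
        obtain ⟨i0, hi0⟩ : F.Nonempty := Finset.card_pos.1 (by omega)
        have hv1 : ({v} : Finset (Fin n)) ∈ Δ.faces :=
          Δ.down_closed hG (Finset.singleton_subset_iff.2 hvG)
        have hvnF : v ∉ F := fun h => hdisj v h hvG
        have hF1 : insert v (F.erase i0) ∈ Δ.faces :=
          global_par hconn hloc hdim hv1 hF hi0 hvnF (hadj i0 hi0)
        have hFpos : 0 < F.card := Finset.card_pos.2 ⟨i0, hi0⟩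
        have hcard1 : G.card < (insert v (F.erase i0)).card := by
          rw [Finset.card_insert_of_notMem (fun h => hvnF (Finset.mem_of_mem_erase h)),
            Finset.card_erase_of_mem hi0]
          omega
        obtain ⟨j, hjF1, hjG, hins⟩ :=
          exch_inter hloc hF1 hG (Finset.mem_insert_self _ _) hvG hcard1
        have hjnev : j ≠ v := fun h => hjG (h ▸ hvG)
        rcases Finset.mem_insert.1 hjF1 with h | h
        · exact absurd h hjnev
        · exact ⟨j, Finset.mem_of_mem_erase h, hjG, hins⟩

end SimComplex
/-- **Theorem.** A simplicial complex of dimension at least 2 is a matroid if and only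
if it is connected and locally a matroid. -/
theorem matroid_iff_connected_and_locally_matroid {n : ℕ} (Δ : SimComplex n)
    (hdim : 2 ≤ Δ.dim) :
    Δ.IsMatroid ↔ (Δ.Connected ∧ Δ.LocallyMatroid) := by
  constructor
  · intro hM
    constructor
    · intro u hu v hv
      by_cases huv : u = v
      · subst huv; exact Relation.ReflTransGen.refl
      obtain ⟨W, hW, hW3⟩ := SimComplex.seed3 Δ hdim
      obtain ⟨i, hiW, hiu, hins⟩ := hM W {u} hW hu
        (by rw [Finset.card_singleton, hW3]; omega)
      obtain ⟨j, hj, hjv, hins2⟩ := hM (insert i {u}) {v} hins hv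
        (by rw [Finset.card_singleton, Finset.card_insert_of_notMem hiu,
          Finset.card_singleton]; omega)
      have hjnev : j ≠ v := by simpa using hjv
      have hinu : i ≠ u := by simpa using hiu
      have hadj1 : Δ.Adj u i := ⟨hinu.symm, by rwa [Finset.pair_comm] at hins⟩
      rcases Finset.mem_insert.1 hj with rfl | hj'
      · exact Relation.ReflTransGen.head hadj1
          (Relation.ReflTransGen.single ⟨hjnev, hins2⟩)
      · have hju : j = u := Finset.mem_singleton.1 hj'
        subst hju
        exact Relation.ReflTransGen.single ⟨huv, hins2⟩
    · intro v hv F G hF hG hcard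
      rw [SimComplex.mem_link_iff] at hF hG
      obtain ⟨i, hiF', hiG', hins⟩ := hM (insert v F) (insert v G) hF.2 hG.2
        (by rw [Finset.card_insert_of_notMem hF.1, Finset.card_insert_of_notMem hG.1]; omega)
      have hinv : i ≠ v := fun h => hiG' (h ▸ Finset.mem_insert_self v G)
      have hiF : i ∈ F := (Finset.mem_insert.1 hiF').resolve_left hinv
      have hiG : i ∉ G := fun h => hiG' (Finset.mem_insert_of_mem h)
      refine ⟨i, hiF, hiG, (SimComplex.mem_link_iff Δ).2 ⟨?_, ?_⟩⟩
      · simp only [Finset.mem_insert]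
        rintro (h | h)
        · exact hinv h.symm
        · exact hG.1 h
      · rw [Finset.insert_comm]; exact hins
  · rintro ⟨hc, hl⟩
    exact SimComplex.backward hc hl hdim
end

section
/- Let Δ be a pure simplicial complex with dim Δ ≥ 2. Then Δ is locally a matroid if and only if Δ is a union of disjoint matroids (i.e. every connected component of Δ is a matroid, and distinct components share no vertices). -/
open CategoryTheory Opposite

/-! ### Auxiliary lemmas for the corollary -/

namespace SimComplex

variable {n : ℕ} {Δ : SimComplex n}

private lemma union_single (s : Finset (Fin n)) (a : Fin n) : s ∪ {a} = insert a s := by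
  rw [Finset.union_comm, ← Finset.insert_eq]

lemma pair_mem {F : Finset (Fin n)} {x y : Fin n} (hF : F ∈ Δ.faces) (hx : x ∈ F)
    (hy : y ∈ F) : ({x, y} : Finset (Fin n)) ∈ Δ.faces := by
  refine Δ.down_closed hF ?_
  intro z hz
  simp only [Finset.mem_insert, Finset.mem_singleton] at hz
  rcases hz with rfl | rfl <;> assumption

lemma single_mem {F : Finset (Fin n)} {x : Fin n} (hF : F ∈ Δ.faces) (hx : x ∈ F) :
    ({x} : Finset (Fin n)) ∈ Δ.faces :=
  Δ.down_closed hF (Finset.singleton_subset_iff.2 hx)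

lemma reach_of_mem {F : Finset (Fin n)} {x y : Fin n} (hF : F ∈ Δ.faces) (hx : x ∈ F)
    (hy : y ∈ F) : Δ.Reach x y := by
  rcases eq_or_ne x y with rfl | h
  · exact Relation.ReflTransGen.refl
  · exact Relation.ReflTransGen.single ⟨h, pair_mem hF hx hy⟩

lemma exists_facet {F : Finset (Fin n)} (hF : F ∈ Δ.faces) :
    ∃ B, Δ.IsFacet B ∧ F ⊆ B := by
  obtain ⟨B, hB, hmax⟩ := Set.Finite.exists_maximalFor Finset.card
    {G | G ∈ Δ.faces ∧ F ⊆ G} (Set.toFinite _) ⟨F, hF, subset_rfl⟩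
  refine ⟨B, ⟨hB.1, fun G hG hBG => ?_⟩, hB.2⟩
  exact Finset.eq_of_subset_of_card_le hBG
    (hmax ⟨hG, hB.2.trans hBG⟩ (Finset.card_le_card hBG))

/-- Augment a face `G` using a face `F` up to the cardinality of `F`. -/
lemma aug {M : SimComplex n} (hM : M.IsMatroid) :
    ∀ (k : ℕ) (G F : Finset (Fin n)), F ∈ M.faces → G ∈ M.faces → F.card - G.card ≤ k →
    ∃ H ∈ M.faces, G ⊆ H ∧ H ⊆ G ∪ F ∧ F.card ≤ H.card := by
  intro k
  induction k with
  | zero =>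
    intro G F hF hG hk
    exact ⟨G, hG, subset_rfl, Finset.subset_union_left, by omega⟩
  | succ k ih =>
    intro G F hF hG hk
    by_cases hle : F.card ≤ G.card
    · exact ⟨G, hG, subset_rfl, Finset.subset_union_left, hle⟩
    · push_neg at hle
      obtain ⟨i, hiF, hiG, hins⟩ := hM F G hF hG hle
      obtain ⟨H, hH, hsub1, hsub2, hcard⟩ := ih (insert i G) F hF hins
        (by rw [Finset.card_insert_of_notMem hiG]; omega)
      refine ⟨H, hH, (Finset.subset_insert _ _).trans hsub1, hsub2.trans ?_, hcard⟩
      rw [Finset.insert_union]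
      exact Finset.insert_subset (Finset.mem_union_right _ hiF) subset_rfl

/-- Parallel transport in a matroid. -/
lemma pt {M : SimComplex n} (hM : M.IsMatroid) {x y w : Fin n}
    (hy : ({y} : Finset (Fin n)) ∈ M.faces) (hxy : ({x, y} : Finset (Fin n)) ∉ M.faces)
    (hxw : ({x, w} : Finset (Fin n)) ∈ M.faces) (hwx : w ≠ x) :
    ({y, w} : Finset (Fin n)) ∈ M.faces := by
  rcases eq_or_ne y w with rfl | hyw
  · have h : ({y, y} : Finset (Fin n)) = {y} := by simp
    rw [h]; exact hy
  obtain ⟨i, hiF, hiG, hins⟩ := hM {x, w} {y} hxw hy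
    (by rw [Finset.card_pair (Ne.symm hwx), Finset.card_singleton]; omega)
  simp only [Finset.mem_insert, Finset.mem_singleton] at hiF
  rcases hiF with rfl | rfl
  · exact absurd hins hxy
  · rwa [Finset.pair_comm] at hins

/-- Augmentation across two intersecting faces, from the local matroid condition. -/
lemma lemX (hloc : Δ.LocallyMatroid) {F G : Finset (Fin n)} {v : Fin n}
    (hF : F ∈ Δ.faces) (hG : G ∈ Δ.faces) (hvF : v ∈ F) (hvG : v ∈ G)
    (hlt : G.card < F.card) : ∃ i ∈ F, i ∉ G ∧ insert i G ∈ Δ.faces := by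
  have hv : v ∈ Δ.vertexSet := single_mem hG hvG
  have hM := hloc v hv
  have hF' : F.erase v ∈ (Δ.link {v}).faces := by
    refine ⟨by simp, ?_⟩
    rwa [union_single, Finset.insert_erase hvF]
  have hG' : G.erase v ∈ (Δ.link {v}).faces := by
    refine ⟨by simp, ?_⟩
    rwa [union_single, Finset.insert_erase hvG]
  have hGpos : 0 < G.card := Finset.card_pos.2 ⟨v, hvG⟩
  obtain ⟨i, hiF, hiG, hins⟩ := hM _ _ hF' hG'
    (by rw [Finset.card_erase_of_mem hvF, Finset.card_erase_of_mem hvG]; omega)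
  have hiv : i ≠ v := (Finset.mem_erase.1 hiF).1
  refine ⟨i, Finset.mem_of_mem_erase hiF, fun h => hiG (Finset.mem_erase.2 ⟨hiv, h⟩), ?_⟩
  have h2 := hins.2
  rwa [union_single, Finset.insert_comm, Finset.insert_erase hvG] at h2

/-- The two-step transport lemma: if `v—u—a` is a path, `{v,a}` is not a face, and
`{a,b}` is an edge, then `{v,b}` is an edge. -/
lemma lemW2 (hloc : Δ.LocallyMatroid) {r : ℕ} (h3 : 3 ≤ r)
    (hfac : ∀ B, Δ.IsFacet B → B.card = r) {v u a b : Fin n}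
    (hvu : ({v, u} : Finset (Fin n)) ∈ Δ.faces) (hvune : v ≠ u)
    (hua : ({u, a} : Finset (Fin n)) ∈ Δ.faces) (huane : u ≠ a)
    (hva : ({v, a} : Finset (Fin n)) ∉ Δ.faces)
    (hab : ({a, b} : Finset (Fin n)) ∈ Δ.faces) (hba : b ≠ a) :
    ({v, b} : Finset (Fin n)) ∈ Δ.faces := by
  by_cases hbu : b = u
  · subst hbu; exact hvu
  have hu_vs : u ∈ Δ.vertexSet := single_mem hua (by simp)
  have ha_vs : a ∈ Δ.vertexSet := single_mem hua (by simp)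
  have hMu := hloc u hu_vs
  -- key: for any facet B containing u, a, and any w ∈ B other than u, a,
  -- {v, w} is a face of link {u}
  have key : ∀ B, Δ.IsFacet B → u ∈ B → a ∈ B → ∀ w ∈ B, w ≠ u → w ≠ a →
      ({v, w} : Finset (Fin n)) ∈ (Δ.link {u}).faces := by
    intro B hBfac huB haB
    have hBr : B.card = r := hfac B hBfac
    have hvB : v ∉ B := fun h => hva (pair_mem hBfac.1 h haB)
    have hBe : B.erase u ∈ (Δ.link {u}).faces := by
      refine ⟨by simp, ?_⟩
      rw [union_single, Finset.insert_erase huB]; exact hBfac.1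
    have hvMu : ({v} : Finset (Fin n)) ∈ (Δ.link {u}).faces := by
      refine ⟨by simp [hvune, Ne.symm hvune], ?_⟩
      rw [union_single]
      rwa [Finset.pair_comm] at hvu
    obtain ⟨H, hH, hvH, hHsub, hcard⟩ := aug hMu r {v} (B.erase u) hBe hvMu
      (by rw [Finset.card_erase_of_mem huB, hBr]; omega)
    have hvHm : v ∈ H := hvH (Finset.mem_singleton_self v)
    have haH : a ∉ H := by
      intro haH'
      have hmem : ({v, a} : Finset (Fin n)) ∈ (Δ.link {u}).faces :=
        (Δ.link {u}).down_closed hH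
          (Finset.insert_subset hvHm (Finset.singleton_subset_iff.2 haH'))
      exact hva (Δ.down_closed hmem.2 Finset.subset_union_left)
    have haBe : a ∈ B.erase u := Finset.mem_erase.2 ⟨Ne.symm huane, haB⟩
    have hHeq : H = insert v ((B.erase u).erase a) := by
      apply Finset.eq_of_subset_of_card_le
      · intro x hx
        rcases Finset.mem_union.1 (hHsub hx) with h | h
        · rw [Finset.mem_singleton] at h
          exact h ▸ Finset.mem_insert_self _ _
        · refine Finset.mem_insert_of_mem (Finset.mem_erase.2 ⟨?_, h⟩)
          rintro rfl; exact haH hx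
      · have hvnot : v ∉ (B.erase u).erase a :=
          fun h => hvB (Finset.mem_of_mem_erase (Finset.mem_of_mem_erase h))
        rw [Finset.card_insert_of_notMem hvnot, Finset.card_erase_of_mem haBe,
          Finset.card_erase_of_mem huB, hBr]
        rw [Finset.card_erase_of_mem huB, hBr] at hcard
        omega
    intro w hwB hwu hwa
    have hwH : w ∈ H := by
      rw [hHeq]
      exact Finset.mem_insert_of_mem (Finset.mem_erase.2 ⟨hwa, Finset.mem_erase.2 ⟨hwu, hwB⟩⟩)
    exact (Δ.link {u}).down_closed hH
      (Finset.insert_subset hvHm (Finset.singleton_subset_iff.2 hwH))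
  by_cases huab : ({u, a, b} : Finset (Fin n)) ∈ Δ.faces
  · obtain ⟨B, hBfac, hsub⟩ := exists_facet huab
    have hkey := key B hBfac (hsub (by simp)) (hsub (by simp)) b (hsub (by simp)) hbu hba
    exact Δ.down_closed hkey.2 Finset.subset_union_left
  · obtain ⟨B, hBfac, hsub⟩ := exists_facet hua
    have huB : u ∈ B := hsub (by simp)
    have haB : a ∈ B := hsub (by simp)
    have haBe : a ∈ B.erase u := Finset.mem_erase.2 ⟨Ne.symm huane, haB⟩
    have hwex : ((B.erase u).erase a).Nonempty := by
      rw [← Finset.card_pos, Finset.card_erase_of_mem haBe, Finset.card_erase_of_mem huB,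
        hfac B hBfac]
      omega
    obtain ⟨w, hw⟩ := hwex
    have hwa : w ≠ a := (Finset.mem_erase.1 hw).1
    have hwu : w ≠ u := (Finset.mem_erase.1 (Finset.mem_of_mem_erase hw)).1
    have hwB : w ∈ B := Finset.mem_of_mem_erase (Finset.mem_of_mem_erase hw)
    have hvw_link := key B hBfac huB haB w hwB hwu hwa
    have hvw : ({v, w} : Finset (Fin n)) ∈ Δ.faces :=
      Δ.down_closed hvw_link.2 Finset.subset_union_left
    have hvwne : v ≠ w := by
      rintro rfl; exact hva (pair_mem hBfac.1 hwB haB)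
    have hMa := hloc a ha_vs
    have hbMa : ({b} : Finset (Fin n)) ∈ (Δ.link {a}).faces := by
      refine ⟨by simp [hba, Ne.symm hba], ?_⟩
      rw [union_single]
      exact hab
    have hubMa : ({u, b} : Finset (Fin n)) ∉ (Δ.link {a}).faces := by
      intro h
      apply huab
      refine Δ.down_closed h.2 ?_
      intro x hx
      simp only [Finset.mem_insert, Finset.mem_singleton] at hx
      simp only [Finset.mem_union, Finset.mem_insert, Finset.mem_singleton]
      tauto
    have huwMa : ({u, w} : Finset (Fin n)) ∈ (Δ.link {a}).faces := by
      refine ⟨by simp [huane, hwa, Ne.symm huane, Ne.symm hwa], ?_⟩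
      refine Δ.down_closed hBfac.1 ?_
      intro x hx
      simp only [Finset.mem_union, Finset.mem_insert, Finset.mem_singleton] at hx
      rcases hx with (rfl | rfl) | rfl <;> assumption
    have hwb : w ≠ b := by
      rintro rfl
      apply huab
      refine Δ.down_closed hBfac.1 ?_
      intro x hx
      simp only [Finset.mem_insert, Finset.mem_singleton] at hx
      rcases hx with rfl | rfl | rfl <;> assumption
    have hbw_Ma := pt hMa hbMa hubMa huwMa hwu
    have hbw : ({b, w} : Finset (Fin n)) ∈ Δ.faces :=
      Δ.down_closed hbw_Ma.2 Finset.subset_union_left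
    by_contra hvb
    have hw_vs : w ∈ Δ.vertexSet := single_mem hBfac.1 hwB
    have hMw := hloc w hw_vs
    have hvMw : ({v} : Finset (Fin n)) ∈ (Δ.link {w}).faces := by
      refine ⟨by simp [hvwne, Ne.symm hvwne], ?_⟩
      rw [union_single]
      rwa [Finset.pair_comm] at hvw
    have hbvMw : ({b, v} : Finset (Fin n)) ∉ (Δ.link {w}).faces := by
      intro h
      have hmem := Δ.down_closed h.2 Finset.subset_union_left
      rw [Finset.pair_comm] at hmem
      exact hvb hmem
    have hbaMw : ({b, a} : Finset (Fin n)) ∈ (Δ.link {w}).faces := by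
      refine ⟨by simp [hwb, hwa, Ne.symm hwb, Ne.symm hwa], ?_⟩
      refine Δ.down_closed hbw_Ma.2 ?_
      intro x hx
      simp only [Finset.mem_union, Finset.mem_insert, Finset.mem_singleton] at hx ⊢
      tauto
    have hvaMw := pt hMw hvMw hbvMw hbaMw (Ne.symm hba)
    exact hva (Δ.down_closed hvaMw.2 Finset.subset_union_left)

/-- A vertex non-adjacent to `a` (in the same component) is adjacent to all
neighbours of `a`. -/
lemma lemW (hloc : Δ.LocallyMatroid) {r : ℕ} (h3 : 3 ≤ r)
    (hfac : ∀ B, Δ.IsFacet B → B.card = r) {v a : Fin n} (h : Δ.Reach v a) :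
    v ≠ a → ({v, a} : Finset (Fin n)) ∉ Δ.faces →
    ∀ b, b ≠ a → ({a, b} : Finset (Fin n)) ∈ Δ.faces →
    ({v, b} : Finset (Fin n)) ∈ Δ.faces := by
  induction h with
  | refl => intro h; exact absurd rfl h
  | @tail q c hvq hqc ih =>
    intro hne hvc b hbc hcb
    by_cases hvq' : v = q
    · subst hvq'
      exact absurd hqc.2 hvc
    · by_cases hvqf : ({v, q} : Finset (Fin n)) ∈ Δ.faces
      · exact lemW2 hloc h3 hfac hvqf hvq' hqc.2 hqc.1 hvc hcb hbc
      · exact absurd (ih hvq' hvqf c (Ne.symm hqc.1) hqc.2) hvc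

/-- Augmentation at consecutive cardinalities. -/
lemma mainA (hloc : Δ.LocallyMatroid) (hconn : Δ.Connected) {r : ℕ} (h3 : 3 ≤ r)
    (hfac : ∀ B, Δ.IsFacet B → B.card = r) :
    ∀ (s : ℕ) (G F : Finset (Fin n)), G ∈ Δ.faces → F ∈ Δ.faces → G.card = s →
      F.card = s + 1 → ∃ i ∈ F, i ∉ G ∧ insert i G ∈ Δ.faces := by
  intro s
  induction s with
  | zero =>
    intro G F hG hF hGc hFc
    rw [Finset.card_eq_zero] at hGc
    subst hGc
    obtain ⟨i, hi⟩ := Finset.card_pos.1 (by omega : 0 < F.card)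
    refine ⟨i, hi, by simp, ?_⟩
    have := single_mem hF hi
    simpa using this
  | succ s ih =>
    intro G F hG hF hGc hFc
    by_cases hint : ∃ x, x ∈ F ∧ x ∈ G
    · obtain ⟨x, hxF, hxG⟩ := hint
      exact lemX hloc hF hG hxF hxG (by omega)
    · push_neg at hint
      rcases Nat.eq_zero_or_pos s with rfl | hs
      · -- |G| = 1, |F| = 2
        obtain ⟨g, rfl⟩ := Finset.card_eq_one.1 hGc
        obtain ⟨x, y, hxy, rfl⟩ := Finset.card_eq_two.1 hFc
        have hgx : g ≠ x := by
          rintro rfl; exact hint g (by simp) (by simp)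
        have hgy : g ≠ y := by
          rintro rfl; exact hint g (by simp) (by simp)
        by_cases hgxf : ({g, x} : Finset (Fin n)) ∈ Δ.faces
        · refine ⟨x, by simp, by simp [Ne.symm hgx], ?_⟩
          rwa [show insert x ({g} : Finset (Fin n)) = {x, g} from rfl, Finset.pair_comm]
        · have hreach : Δ.Reach g x :=
            hconn g (single_mem hG (by simp)) x (single_mem hF (by simp))
          have hgb := lemW hloc h3 hfac hreach hgx hgxf y (Ne.symm hxy) hF
          refine ⟨y, by simp, by simp [Ne.symm hgy], ?_⟩
          rwa [show insert y ({g} : Finset (Fin n)) = {y, g} from rfl, Finset.pair_comm]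
      · -- s ≥ 1
        obtain ⟨vG, hvG⟩ := Finset.card_pos.1 (by omega : 0 < G.card)
        obtain ⟨F', hF'sub, hF'c⟩ := Finset.exists_subset_card_eq (by omega : s + 1 ≤ F.card)
        have hF' : F' ∈ Δ.faces := Δ.down_closed hF hF'sub
        obtain ⟨i1, hi1F', hi1ne, hins1⟩ := ih (G.erase vG) F'
          (Δ.down_closed hG (Finset.erase_subset _ _)) hF'
          (by rw [Finset.card_erase_of_mem hvG]; omega) hF'c
        have hi1F : i1 ∈ F := hF'sub hi1F'
        have hi1G : i1 ∉ G := hint i1 hi1F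
        have hG1card : (insert i1 (G.erase vG)).card = s + 1 := by
          rw [Finset.card_insert_of_notMem hi1ne, Finset.card_erase_of_mem hvG]; omega
        obtain ⟨i2, hi2F, hi2G1, hins2⟩ := lemX hloc hF hins1 hi1F
          (Finset.mem_insert_self _ _) (by omega)
        obtain ⟨w, hw⟩ := Finset.card_pos.1
          (by rw [Finset.card_erase_of_mem hvG]; omega : 0 < (G.erase vG).card)
        have hwG : w ∈ G := Finset.mem_of_mem_erase hw
        have hwH : w ∈ insert i2 (insert i1 (G.erase vG)) :=
          Finset.mem_insert_of_mem (Finset.mem_insert_of_mem hw)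
        have hHcard : (insert i2 (insert i1 (G.erase vG))).card = s + 2 := by
          rw [Finset.card_insert_of_notMem hi2G1]; omega
        obtain ⟨j, hjH, hjG, hins3⟩ := lemX hloc hins2 hG hwH hwG (by omega)
        refine ⟨j, ?_, hjG, hins3⟩
        rcases Finset.mem_insert.1 hjH with rfl | hj
        · exact hi2F
        · rcases Finset.mem_insert.1 hj with rfl | hj'
          · exact hi1F
          · exact absurd (Finset.mem_of_mem_erase hj') hjG

/-- Main lemma: a connected, pure, locally matroid complex with facets of size at
least 3 is a matroid. -/
lemma main_matroid {r : ℕ} (hfac : ∀ B, Δ.IsFacet B → B.card = r) (h3 : 3 ≤ r)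
    (hconn : Δ.Connected) (hloc : Δ.LocallyMatroid) : Δ.IsMatroid := by
  intro F G hF hG hlt
  obtain ⟨F', hsub, hcard⟩ := Finset.exists_subset_card_eq (by omega : G.card + 1 ≤ F.card)
  obtain ⟨i, hiF, hiG, hins⟩ := mainA hloc hconn h3 hfac G.card G F' hG
    (Δ.down_closed hF hsub) rfl hcard
  exact ⟨i, hsub hiF, hiG, hins⟩

lemma component_faces {v : Fin n} {F : Finset (Fin n)} :
    F ∈ (Δ.component v).faces ↔ F ∈ Δ.faces ∧ ∀ x ∈ F, Δ.Reach v x := by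
  constructor
  · rintro ⟨h1, h2⟩
    exact ⟨h1, fun x hx => h2 hx⟩
  · rintro ⟨h1, h2⟩
    exact ⟨h1, fun x hx => h2 x hx⟩

end SimComplex

/-- **Corollary.** A pure simplicial complex of dimension at least 2 is locally a matroid
if and only if every connected component of it is a matroid (distinct components being
automatically vertex-disjoint). -/
theorem pure_locally_matroid_iff_components_matroid {n : ℕ} (Δ : SimComplex n)
    (hpure : Δ.Pure) (hdim : 2 ≤ Δ.dim) :
    Δ.LocallyMatroid ↔ ∀ v ∈ Δ.vertexSet, (Δ.component v).IsMatroid := by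
  classical
  have hr3 : 3 ≤ sSup (Finset.card '' Δ.faces) := by
    have h := hdim
    simp only [SimComplex.dim, Int.ofNat_eq_coe] at h
    omega
  set r := sSup (Finset.card '' Δ.faces) with hrdef
  have hne : Δ.faces.Nonempty := by
    by_contra h
    rw [Set.not_nonempty_iff_eq_empty] at h
    have : r = 0 := by rw [hrdef, h, Set.image_empty, csSup_empty]; rfl
    omega
  have hbdd : BddAbove (Finset.card '' Δ.faces) := (Set.toFinite _).bddAbove
  have hmem : r ∈ Finset.card '' Δ.faces := Nat.sSup_mem (hne.image _) hbdd
  obtain ⟨F₀, hF₀, hF₀c⟩ := hmem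
  have hcard_le : ∀ F ∈ Δ.faces, F.card ≤ r := fun F hF => le_csSup hbdd ⟨F, hF, rfl⟩
  have hF₀facet : Δ.IsFacet F₀ := ⟨hF₀, fun G hG hsub =>
    Finset.eq_of_subset_of_card_le hsub (by rw [hF₀c]; exact hcard_le G hG)⟩
  have hfac : ∀ B, Δ.IsFacet B → B.card = r := fun B hB => by
    rw [hpure B F₀ hB hF₀facet, hF₀c]
  constructor
  · -- locally matroid → components are matroids
    intro hloc v hv
    have hΓfaces : ∀ {F : Finset (Fin n)},
        F ∈ (Δ.component v).faces ↔ F ∈ Δ.faces ∧ ∀ x ∈ F, Δ.Reach v x :=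
      fun {F} => SimComplex.component_faces
    have hfacΓ : ∀ B, (Δ.component v).IsFacet B → B.card = r := by
      intro B hB
      have hBΔ := (hΓfaces.1 hB.1).1
      obtain ⟨B', hB'fac, hsub⟩ := SimComplex.exists_facet hBΔ
      have hvΓ : ({v} : Finset (Fin n)) ∈ (Δ.component v).faces := by
        refine hΓfaces.2 ⟨hv, ?_⟩
        intro x hx
        rw [Finset.mem_singleton] at hx
        subst hx
        exact Relation.ReflTransGen.refl
      have hBne : B.Nonempty := by
        rcases Finset.eq_empty_or_nonempty B with rfl | h
        · exact absurd (hB.2 {v} hvΓ (Finset.empty_subset _)).symm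
            (Finset.singleton_ne_empty v)
        · exact h
      obtain ⟨w, hwB⟩ := hBne
      have hreachw : Δ.Reach v w := (hΓfaces.1 hB.1).2 w hwB
      have hB'Γ : B' ∈ (Δ.component v).faces :=
        hΓfaces.2 ⟨hB'fac.1, fun x hx =>
          hreachw.trans (SimComplex.reach_of_mem hB'fac.1 (hsub hwB) hx)⟩
      rw [hB.2 B' hB'Γ hsub]
      exact hfac B' hB'fac
    have hreach_comp : ∀ x, Δ.Reach v x → (Δ.component v).Reach v x := by
      intro x h
      induction h with
      | refl => exact Relation.ReflTransGen.refl
      | @tail q c hvq hqc ih =>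
        refine ih.tail ⟨hqc.1, hΓfaces.2 ⟨hqc.2, ?_⟩⟩
        intro y hy
        rw [Finset.mem_insert, Finset.mem_singleton] at hy
        rcases hy with rfl | rfl
        · exact hvq
        · exact hvq.tail hqc
    have hsymmΓ : Symmetric (Δ.component v).Adj := by
      intro x y h
      exact ⟨Ne.symm h.1, by rw [Finset.pair_comm]; exact h.2⟩
    have hconnΓ : (Δ.component v).Connected := by
      intro x hx y hy
      have hrx : Δ.Reach v x := (hΓfaces.1 hx).2 x (Finset.mem_singleton_self x)
      have hry : Δ.Reach v y := (hΓfaces.1 hy).2 y (Finset.mem_singleton_self y)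
      exact ((@Relation.ReflTransGen.stdSymm _ _ ⟨hsymmΓ⟩).symm _ _ (hreach_comp x hrx)).trans
        (hreach_comp y hry)
    have hlocΓ : (Δ.component v).LocallyMatroid := by
      intro u hu
      have huΔf : ({u} : Finset (Fin n)) ∈ Δ.faces := (hΓfaces.1 hu).1
      have hru : Δ.Reach v u := (hΓfaces.1 hu).2 u (Finset.mem_singleton_self u)
      have hfeq : ((Δ.component v).link {u}).faces = (Δ.link {u}).faces := by
        ext F
        constructor
        · rintro ⟨hd, hf⟩
          exact ⟨hd, (hΓfaces.1 hf).1⟩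
        · rintro ⟨hd, hf⟩
          refine ⟨hd, hΓfaces.2 ⟨hf, fun x hx => hru.trans
            (SimComplex.reach_of_mem hf
              (Finset.mem_union_right _ (Finset.mem_singleton_self u)) hx)⟩⟩
      have hM := hloc u huΔf
      intro F G hF hG hlt
      rw [hfeq] at hF hG
      obtain ⟨i, h1, h2, h3⟩ := hM F G hF hG hlt
      exact ⟨i, h1, h2, by rw [hfeq]; exact h3⟩
    exact SimComplex.main_matroid hfacΓ hr3 hconnΓ hlocΓ
  · -- components are matroids → locally matroid
    intro hcomp u hu
    intro F G hF hG hlt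
    have hM := hcomp u hu
    have huF : u ∉ F := Finset.disjoint_singleton_right.1 hF.1
    have huG : u ∉ G := Finset.disjoint_singleton_right.1 hG.1
    have hFu : F ∪ {u} ∈ (Δ.component u).faces :=
      SimComplex.component_faces.2 ⟨hF.2, fun x hx =>
        SimComplex.reach_of_mem hF.2
          (Finset.mem_union_right _ (Finset.mem_singleton_self u)) hx⟩
    have hGu : G ∪ {u} ∈ (Δ.component u).faces :=
      SimComplex.component_faces.2 ⟨hG.2, fun x hx =>
        SimComplex.reach_of_mem hG.2
          (Finset.mem_union_right _ (Finset.mem_singleton_self u)) hx⟩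
    have hcF : (F ∪ {u}).card = F.card + 1 := by
      rw [SimComplex.union_single, Finset.card_insert_of_notMem huF]
    have hcG : (G ∪ {u}).card = G.card + 1 := by
      rw [SimComplex.union_single, Finset.card_insert_of_notMem huG]
    obtain ⟨i, hiFu, hiGu, hins⟩ := hM (F ∪ {u}) (G ∪ {u}) hFu hGu
      (by rw [hcF, hcG]; omega)
    have hiu : i ≠ u := by
      rintro rfl
      exact hiGu (Finset.mem_union_right _ (Finset.mem_singleton_self i))
    have hiF : i ∈ F := by
      rcases Finset.mem_union.1 hiFu with h | h
      · exact h
      · exact absurd (Finset.mem_singleton.1 h) hiu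
    have hiG : i ∉ G := fun h => hiGu (Finset.mem_union_left _ h)
    refine ⟨i, hiF, hiG, ?_, ?_⟩
    · rw [Finset.disjoint_singleton_right, Finset.mem_insert]
      push_neg
      exact ⟨Ne.symm hiu, huG⟩
    · rw [Finset.insert_union]
      exact (SimComplex.component_faces.1 hins).1
end

section
/- Let Δ be a matroid and let F and G be two maximal proper subsets of a minimal nonface of Δ. Then link_Δ F = link_Δ G. -/
open CategoryTheory Opposite

private lemma link_subset_aux {n : ℕ} (Δ : SimComplex n)
    (hM : Δ.IsMatroid) (H F G : Finset (Fin n))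
    (hH : H ∉ Δ.faces) (hGface : G ∈ Δ.faces)
    (hF : F ⊂ H) (hFcard : F.card + 1 = H.card)
    (hG : G ⊂ H) (hGcard : G.card + 1 = H.card) :
    (Δ.link F).faces ⊆ (Δ.link G).faces := by
  intro K hK
  obtain ⟨hKF, hKFface⟩ := hK
  have hcard : F.card = G.card := by omega
  have hfill : ∀ i ∈ H, i ∉ G → insert i G = H := by
    intro i hiH hiG
    apply Finset.eq_of_subset_of_card_le
    · exact Finset.insert_subset hiH hG.subset
    · rw [Finset.card_insert_of_notMem hiG]; omega
  have hfillF : ∀ i ∈ H, i ∉ F → insert i F = H := by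
    intro i hiH hiF
    apply Finset.eq_of_subset_of_card_le
    · exact Finset.insert_subset hiH hF.subset
    · rw [Finset.card_insert_of_notMem hiF]; omega
  have hKH : Disjoint K H := by
    rw [Finset.disjoint_left]
    intro x hxK hxH
    by_cases hxF : x ∈ F
    · exact (Finset.disjoint_left.mp hKF hxK) hxF
    · have hsub : H ⊆ K ∪ F := by
        rw [← hfillF x hxH hxF]
        exact Finset.insert_subset (Finset.mem_union_left _ hxK) Finset.subset_union_right
      exact absurd (Δ.down_closed hKFface hsub) hH
  have hKG : Disjoint K G := hKH.mono_right hG.subset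
  have key : ∀ m, m ≤ K.card →
      ∃ C ∈ Δ.faces, G ⊆ C ∧ C ⊆ K ∪ G ∧ C.card = G.card + m := by
    intro m
    induction m with
    | zero => exact fun _ => ⟨G, hGface, subset_rfl, Finset.subset_union_right, by simp⟩
    | succ m ih =>
      intro hm
      obtain ⟨C, hCface, hGC, hCsub, hCcard⟩ := ih (by omega)
      have hcardlt : C.card < (K ∪ F).card := by
        rw [Finset.card_union_of_disjoint hKF]
        omega
      obtain ⟨i, hiA, hiC, hins⟩ := hM (K ∪ F) C hKFface hCface hcardlt
      have hiKG : i ∈ K ∪ G := by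
        rcases Finset.mem_union.mp hiA with hiK | hiF
        · exact Finset.mem_union_left _ hiK
        · by_cases hiG : i ∈ G
          · exact Finset.mem_union_right _ hiG
          · exfalso
            have hHsub : H ⊆ insert i C := by
              rw [← hfill i (hF.subset hiF) hiG]
              exact Finset.insert_subset_insert _ hGC
            exact hH (Δ.down_closed hins hHsub)
      exact ⟨insert i C, hins, hGC.trans (Finset.subset_insert _ _),
        Finset.insert_subset hiKG hCsub,
        by rw [Finset.card_insert_of_notMem hiC]; omega⟩
  obtain ⟨C, hCface, hGC, hCsub, hCcard⟩ := key K.card le_rfl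
  have hCeq : C = K ∪ G := by
    apply Finset.eq_of_subset_of_card_le hCsub
    rw [Finset.card_union_of_disjoint hKG]
    omega
  exact ⟨hKG, hCeq ▸ hCface⟩

/-- **Lemma.** In a matroid, any two maximal proper subsets of a minimal nonface have
the same link. -/
theorem link_eq_of_maximal_subsets_of_minimal_nonface {n : ℕ} (Δ : SimComplex n)
    (hM : Δ.IsMatroid) (H F G : Finset (Fin n))
    (hH : H ∉ Δ.faces) (hHmin : ∀ F' ⊂ H, F' ∈ Δ.faces)
    (hF : F ⊂ H) (hFcard : F.card + 1 = H.card)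
    (hG : G ⊂ H) (hGcard : G.card + 1 = H.card) :
    (Δ.link F).faces = (Δ.link G).faces :=
  Set.Subset.antisymm
    (link_subset_aux Δ hM H F G hH (hHmin G hG) hF hFcard hG hGcard)
    (link_subset_aux Δ hM H G F hH (hHmin F hF) hG hGcard hF hFcard)
end
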